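/- Let M be a topological space, E a real topological vector space, and ψ : M → E a map. Then ψ is convex if and only if for every convex subset B ⊆ E the preimage ψ⁻¹(B) is preconnected. -/

import Mathlib

/-- A map `ψ : M → E` is convex (preimages of segments between points of
the range are connected) if and only if the preimage of every convex subset of `E`
is preconnected. -/
theorem stmt1 {M E : Type*} [TopologicalSpace M]
    [AddCommGroup E] [Module ℝ E] [TopologicalSpace E]
    [IsTopologicalAddGroup E] [ContinuousSMul ℝ E]
    (ψ : M → E) :
    (∀ u ∈ Set.range ψ, ∀ v ∈ Set.range ψ,
        IsConnected (ψ ⁻¹' segment ℝ u v)) ↔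
      (∀ B : Set E, Convex ℝ B → IsPreconnected (ψ ⁻¹' B)) := by
  constructor
  · intro h B hB
    apply isPreconnected_of_forall_pair
    intro x hx y hy
    refine ⟨ψ ⁻¹' segment ℝ (ψ x) (ψ y), ?_, ?_, ?_, ?_⟩
    · exact Set.preimage_mono (hB.segment_subset hx hy)
    · exact Set.mem_preimage.mpr (left_mem_segment ℝ _ _)
    · exact Set.mem_preimage.mpr (right_mem_segment ℝ _ _)
    · exact (h _ ⟨x, rfl⟩ _ ⟨y, rfl⟩).isPreconnected
  · rintro h u ⟨x, rfl⟩ v ⟨y, rfl⟩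
    exact ⟨⟨x, left_mem_segment ℝ _ _⟩, h _ (convex_segment _ _)⟩
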